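/- Let n ≥ 2, a, b > 0 and fix 0 < r ≤ s ≤ R and r_* ≤ H ≤ R_* with r_*, R_* > 0. Then there exists a constant C > 0 (depending on n, a, b, r, R, r_*, R_* but not on K) such that for all K > 0: C·(K^n + K^{1−n}) ≤ L(s,H,K), where L(s,H,K) = a s^{n−1}((n−1)H²/s² + K²)^{n/2} + b H^{n−1}((n−1)s²/H² + K^{−2})^{n/2} K. In particular L is coercive in K. -/
import Mathlib


/-- Coercivity bound: `C (Kⁿ + K^(1-n)) ≤ L(s,H,K)` uniformly on
`[r,R] × [r_*,R_*]` for some constant `C > 0`. -/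
theorem coercivity_L (n : ℕ) (hn : 2 ≤ n) (a b r R rs Rs : ℝ)
    (ha : 0 < a) (hb : 0 < b) (hr : 0 < r) (hrR : r ≤ R) (hrs : 0 < rs) (hRs : rs ≤ Rs) :
    ∃ C > (0 : ℝ), ∀ s ∈ Set.Icc r R, ∀ H ∈ Set.Icc rs Rs, ∀ K > (0 : ℝ),
      C * (K ^ (n : ℝ) + K ^ ((1 : ℝ) - n))
        ≤ a * s ^ (n - 1) * (((n : ℝ) - 1) * H ^ 2 / s ^ 2 + K ^ 2) ^ ((n : ℝ) / 2)
            + b * H ^ (n - 1) * (((n : ℝ) - 1) * s ^ 2 / H ^ 2 + (K ^ 2)⁻¹) ^ ((n : ℝ) / 2) * K := by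
  refine ⟨min (a * r ^ (n - 1)) (b * rs ^ (n - 1)), ?_, ?_⟩
  · exact lt_min (by positivity) (by positivity)
  intro s hs H hH K hK
  obtain ⟨hrs', hsR⟩ := hs
  obtain ⟨hrsH, hHR⟩ := hH
  have hspos : 0 < s := lt_of_lt_of_le hr hrs'
  have hHpos : 0 < H := lt_of_lt_of_le hrs hrsH
  have hn1 : (0:ℝ) ≤ (n:ℝ) - 1 := by
    have : (1:ℝ) ≤ n := by exact_mod_cast le_trans (by norm_num) hn
    linarith
  have hnonneg1 : (0:ℝ) ≤ ((n:ℝ) - 1) * H ^ 2 / s ^ 2 := by positivity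
  have hnonneg2 : (0:ℝ) ≤ ((n:ℝ) - 1) * s ^ 2 / H ^ 2 := by positivity
  have hK2 : (0:ℝ) ≤ K ^ 2 := by positivity
  -- (K^2)^(n/2) = K^n
  have e1 : ((K ^ 2 : ℝ)) ^ ((n:ℝ) / 2) = K ^ (n:ℝ) := by
    rw [← Real.rpow_natCast K 2, ← Real.rpow_mul hK.le]
    congr 1; ring
  have e2 : ((K ^ 2 : ℝ))⁻¹ ^ ((n:ℝ) / 2) = K ^ (-(n:ℝ)) := by
    rw [← Real.rpow_natCast K 2, ← Real.rpow_neg hK.le, ← Real.rpow_mul hK.le]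
    congr 1; ring
  -- first term bound
  have h1 : min (a * r ^ (n - 1)) (b * rs ^ (n - 1)) * K ^ (n:ℝ)
      ≤ a * s ^ (n - 1) * (((n : ℝ) - 1) * H ^ 2 / s ^ 2 + K ^ 2) ^ ((n : ℝ) / 2) := by
    have hm : (K ^ 2 : ℝ) ^ ((n:ℝ)/2) ≤ (((n : ℝ) - 1) * H ^ 2 / s ^ 2 + K ^ 2) ^ ((n : ℝ) / 2) :=
      Real.rpow_le_rpow hK2 (by linarith) (by positivity)
    rw [e1] at hm
    calc min (a * r ^ (n - 1)) (b * rs ^ (n - 1)) * K ^ (n:ℝ)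
        ≤ a * r ^ (n - 1) * K ^ (n:ℝ) :=
          mul_le_mul_of_nonneg_right (min_le_left _ _) (by positivity)
      _ ≤ a * s ^ (n - 1) * K ^ (n:ℝ) := by
          gcongr
      _ ≤ a * s ^ (n - 1) * (((n : ℝ) - 1) * H ^ 2 / s ^ 2 + K ^ 2) ^ ((n : ℝ) / 2) := by
          gcongr
  -- second term bound
  have h2 : min (a * r ^ (n - 1)) (b * rs ^ (n - 1)) * K ^ ((1:ℝ) - n)
      ≤ b * H ^ (n - 1) * (((n : ℝ) - 1) * s ^ 2 / H ^ 2 + (K ^ 2)⁻¹) ^ ((n : ℝ) / 2) * K := by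
    have hm : ((K ^ 2 : ℝ))⁻¹ ^ ((n:ℝ)/2)
        ≤ (((n : ℝ) - 1) * s ^ 2 / H ^ 2 + (K ^ 2)⁻¹) ^ ((n : ℝ) / 2) :=
      Real.rpow_le_rpow (by positivity) (by linarith) (by positivity)
    rw [e2] at hm
    have key : K ^ (-(n:ℝ)) * K = K ^ ((1:ℝ) - n) := by
      nth_rewrite 2 [← Real.rpow_one K]
      rw [← Real.rpow_add hK]
      ring_nf
    calc min (a * r ^ (n - 1)) (b * rs ^ (n - 1)) * K ^ ((1:ℝ) - n)
        ≤ b * rs ^ (n - 1) * K ^ ((1:ℝ) - n) :=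
          mul_le_mul_of_nonneg_right (min_le_right _ _) (by positivity)
      _ ≤ b * H ^ (n - 1) * K ^ ((1:ℝ) - n) := by
          gcongr
      _ = b * H ^ (n - 1) * (K ^ (-(n:ℝ)) * K) := by rw [key]
      _ ≤ b * H ^ (n - 1) * ((((n : ℝ) - 1) * s ^ 2 / H ^ 2 + (K ^ 2)⁻¹) ^ ((n : ℝ) / 2) * K) := by
          gcongr
      _ = b * H ^ (n - 1) * (((n : ℝ) - 1) * s ^ 2 / H ^ 2 + (K ^ 2)⁻¹) ^ ((n : ℝ) / 2) * K := by
          ring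
  calc min (a * r ^ (n - 1)) (b * rs ^ (n - 1)) * (K ^ (n:ℝ) + K ^ ((1:ℝ) - n))
      = min (a * r ^ (n - 1)) (b * rs ^ (n - 1)) * K ^ (n:ℝ)
        + min (a * r ^ (n - 1)) (b * rs ^ (n - 1)) * K ^ ((1:ℝ) - n) := by ring
    _ ≤ _ := add_le_add h1 h2
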